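/- (Existence of entanglement witnesses) If ρ is a bipartite density matrix that is not separable, then there exists a Hermitian matrix W such that tr(W ρ_S) ≥ 0 for every separable density matrix ρ_S, and tr(W ρ) < 0. -/

import Mathlib

open Matrix Finset
open scoped Kronecker ComplexOrder

def IsDensity {p : Type*} [Fintype p] (ρ : Matrix p p ℂ) : Prop :=
  ρ.PosSemidef ∧ ρ.trace = 1

def IsSepState {pA pB : ℕ} (ρ : Matrix (Fin pA × Fin pB) (Fin pA × Fin pB) ℂ) : Prop :=
  ∃ (n : ℕ) (q : Fin n → ℝ) (σA : Fin n → Matrix (Fin pA) (Fin pA) ℂ)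
    (σB : Fin n → Matrix (Fin pB) (Fin pB) ℂ),
    (∀ j, 0 ≤ q j) ∧ (∑ j, q j) = 1 ∧
    (∀ j, IsDensity (σA j)) ∧ (∀ j, IsDensity (σB j)) ∧
    ρ = ∑ j, (q j : ℂ) • (σA j ⊗ₖ σB j)

attribute [local instance] Matrix.normedAddCommGroup Matrix.normedSpace

theorem myIsCompact_convexHull {E : Type*} [NormedAddCommGroup E] [NormedSpace ℝ E]
    [FiniteDimensional ℝ E] {s : Set E} (hs : IsCompact s) : IsCompact (convexHull ℝ s) := by
  classical
  obtain rfl | ⟨x₀, hx₀⟩ := s.eq_empty_or_nonempty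
  · simpa [convexHull_empty] using isCompact_empty
  set d : ℕ := Module.finrank ℝ E + 1 with hd
  have hK : IsCompact ((stdSimplex ℝ (Fin d)) ×ˢ (Set.univ.pi fun _ : Fin d => s)) :=
    (isCompact_stdSimplex ℝ _).prod (isCompact_univ_pi fun _ => hs)
  have hf : Continuous (fun p : (Fin d → ℝ) × (Fin d → E) => ∑ i, p.1 i • p.2 i) :=
    continuous_finset_sum _ fun i _ =>
      ((continuous_apply i).comp continuous_fst).smul ((continuous_apply i).comp continuous_snd)
  have himg : convexHull ℝ s =
      (fun p : (Fin d → ℝ) × (Fin d → E) => ∑ i, p.1 i • p.2 i) ''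
        ((stdSimplex ℝ (Fin d)) ×ˢ (Set.univ.pi fun _ : Fin d => s)) := by
    apply Set.Subset.antisymm
    · intro x hx
      obtain ⟨ι, hfin, z, w, hzs, hai, hw0, hw1, hwz⟩ := eq_pos_convex_span_of_mem_convexHull hx
      have hcard : Fintype.card ι ≤ d := by
        have h1 := hai.card_le_finrank_succ
        have h2 := Submodule.finrank_le (vectorSpan ℝ (Set.range z))
        omega
      set g : ι → Fin d := fun i => Fin.castLE hcard (Fintype.equivFin ι i) with hg
      have hginj : Function.Injective g := fun a b hab =>
        (Fintype.equivFin ι).injective (Fin.castLE_injective _ hab)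
      set w' : Fin d → ℝ := fun k => ∑ i ∈ univ.filter (fun i => g i = k), w i with hw'
      set z' : Fin d → E := fun k => if h : ∃ i, g i = k then z h.choose else x₀ with hz'
      have hzz : ∀ k, ∀ i, g i = k → z' k = z i := by
        intro k i hik
        have h : ∃ i, g i = k := ⟨i, hik⟩
        have : h.choose = i := hginj (h.choose_spec.trans hik.symm)
        simp [hz', dif_pos h, this]
      refine ⟨(w', z'), ⟨⟨fun k => Finset.sum_nonneg fun i _ => (hw0 i).le, ?_⟩, ?_⟩, ?_⟩
      · rw [Finset.sum_fiberwise univ g w]; exact hw1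
      · intro k _
        by_cases h : ∃ i, g i = k
        · simpa [hz', dif_pos h] using hzs (Set.mem_range_self h.choose)
        · simpa [hz', dif_neg h] using hx₀
      · dsimp only
        rw [← hwz, ← Finset.sum_fiberwise univ g (fun i => w i • z i)]
        refine Finset.sum_congr rfl fun k _ => ?_
        rw [hw', Finset.sum_smul]
        exact Finset.sum_congr rfl fun i hi => by
          rw [hzz k i (Finset.mem_filter.mp hi).2]
    · rintro x ⟨⟨w, z⟩, ⟨⟨hw0, hw1⟩, hz⟩, rfl⟩
      have := Finset.centerMass_mem_convexHull (univ : Finset (Fin d))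
        (fun i _ => hw0 i) (hw1 ▸ one_pos) (z := z) (fun i _ => (Set.mem_univ_pi.mp hz) i)
      rwa [Finset.centerMass_eq_of_sum_1 _ _ hw1] at this
  rw [himg]
  exact hK.image hf

lemma single_quad {p : ℕ} (σ : Matrix (Fin p) (Fin p) ℂ) (a b : Fin p) (x y : ℂ) :
    star (Pi.single a x) ⬝ᵥ (σ *ᵥ Pi.single b y) = star x * σ a b * y := by
  simp [mulVec_single, dotProduct, Pi.single_apply, Pi.star_apply, apply_ite (star : ℂ → ℂ),
    Finset.sum_ite_eq', mul_assoc, mul_comm, mul_left_comm]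

lemma density_entry_bound {p : ℕ} {σ : Matrix (Fin p) (Fin p) ℂ} (h : IsDensity σ)
    (i j : Fin p) : ‖σ i j‖ ≤ 1 := by
  obtain ⟨⟨hherm, hq⟩, htr⟩ := h
  have hquad : ∀ v, 0 ≤ (star v ⬝ᵥ (σ *ᵥ v)) :=
    (posSemidef_iff_dotProduct_mulVec.mp ⟨hherm, hq⟩).2
  have hdiag : ∀ k, 0 ≤ σ k k := by
    intro k
    have := hquad (Pi.single k 1)
    rwa [single_quad, star_one, one_mul, mul_one] at this
  have hdre : ∀ k, 0 ≤ (σ k k).re := fun k => (Complex.le_def.mp (hdiag k)).1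
  have hsum : ∑ k, (σ k k).re = 1 := by
    have := congrArg Complex.re htr
    simpa [Matrix.trace, Matrix.diag, Complex.re_sum] using this
  have hdle : ∀ k, (σ k k).re ≤ 1 := by
    intro k
    rw [← hsum]
    exact Finset.single_le_sum (fun k _ => hdre k) (Finset.mem_univ k)
  by_cases hij : i = j
  · subst hij
    have him : (σ i i).im = 0 := ((Complex.le_def.mp (hdiag i)).2).symm
    have : σ i i = ((σ i i).re : ℂ) := Complex.ext rfl (by simp [him])
    rw [this]
    simpa [Complex.norm_real, abs_of_nonneg (hdre i)] using hdle i
  · by_cases hz : σ i j = 0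
    · simp [hz]
    have hnz : (‖σ i j‖ : ℂ) ≠ 0 := by
      simpa using norm_ne_zero_iff.mpr hz
    set z := σ i j with hzdef
    set c : ℂ := -(star z) / (‖z‖ : ℂ) with hc
    have key : z * star z = ((‖z‖ : ℂ)) ^ 2 := by
      rw [Complex.star_def, Complex.mul_conj, Complex.normSq_eq_norm_sq]
      push_cast; ring
    have e1 : z * c = -(‖z‖ : ℂ) := by
      rw [hc]
      have : z * (-star z / (‖z‖ : ℂ)) = -(z * star z) / (‖z‖ : ℂ) := by ring
      rw [this, key, pow_two, neg_div, mul_div_assoc, div_self hnz, mul_one]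
    have e2 : star c * σ j i = -(‖z‖ : ℂ) := by
      have hji : σ j i = star z := by
        rw [hzdef]
        exact (congrFun (congrFun hherm j) i).symm
      calc star c * σ j i = star (z * c) := by rw [hji, StarMul.star_mul]
        _ = -(‖z‖ : ℂ) := by rw [e1]; simp
    have hcc : star c * c = 1 := by
      have : star c * c = ((‖c‖ : ℂ)) ^ 2 := by
        rw [mul_comm]
        rw [Complex.star_def, Complex.mul_conj, Complex.normSq_eq_norm_sq]
        push_cast; ring
      rw [this]
      have hcnorm : ‖c‖ = 1 := by
        rw [hc]
        rw [norm_div, norm_neg, norm_star]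
        simp only [Complex.norm_real, Real.norm_eq_abs, abs_norm]
        exact div_self (norm_ne_zero_iff.mpr hz)
      rw [hcnorm]; norm_num
    have e3 : star c * σ j j * c = σ j j := by
      have : star c * σ j j * c = σ j j * (star c * c) := by ring
      rw [this, hcc, mul_one]
    have hq2 := hquad (Pi.single i 1 + Pi.single j c)
    have hexp : star (Pi.single i (1:ℂ) + Pi.single j c) ⬝ᵥ (σ *ᵥ (Pi.single i 1 + Pi.single j c))
        = σ i i + σ j j - 2 * (‖z‖ : ℂ) := by
      rw [star_add, mulVec_add, dotProduct_add, add_dotProduct, add_dotProduct]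
      rw [single_quad, single_quad, single_quad, single_quad]
      rw [star_one, e3]
      have h1 : σ i j * c = z * c := by rw [hzdef]
      simp only [one_mul, mul_one, h1, e1, e2]
      ring
    rw [hexp] at hq2
    have hre := (Complex.le_def.mp hq2).1
    simp only [Complex.sub_re, Complex.add_re, Complex.mul_re, Complex.zero_re,
      Complex.ofReal_re, Complex.ofReal_im] at hre
    have hpair : (σ i i).re + (σ j j).re ≤ 1 := by
      rw [← hsum]
      have : (σ i i).re + (σ j j).re = ∑ k ∈ ({i, j} : Finset (Fin p)), (σ k k).re :=
        (Finset.sum_pair (f := fun k => (σ k k).re) hij).symm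
      rw [this]
      exact Finset.sum_le_sum_of_subset_of_nonneg (Finset.subset_univ _)
        (fun k _ _ => hdre k)
    have : ‖z‖ ≤ 1 := by
      have h2re : ((2 : ℂ)).re = 2 := by norm_num
      have h2im : ((2 : ℂ)).im = 0 := by norm_num
      rw [h2re, h2im] at hre
      nlinarith [norm_nonneg z]
    simpa [hzdef] using this

lemma isClosed_density {p : ℕ} : IsClosed {σ : Matrix (Fin p) (Fin p) ℂ | IsDensity σ} := by
  have hset : {σ : Matrix (Fin p) (Fin p) ℂ | IsDensity σ} =
      ({σ : Matrix (Fin p) (Fin p) ℂ | σᴴ = σ} ∩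
        ⋂ x : Fin p → ℂ, {σ : Matrix (Fin p) (Fin p) ℂ |
          0 ≤ (star x ⬝ᵥ (σ *ᵥ x)).re ∧ (star x ⬝ᵥ (σ *ᵥ x)).im = 0}) ∩
      {σ : Matrix (Fin p) (Fin p) ℂ | σ.trace = 1} := by
    ext σ
    simp only [Set.mem_setOf_eq, Set.mem_inter_iff, Set.mem_iInter, IsDensity,
      Matrix.PosSemidef, Matrix.IsHermitian]
    constructor
    · rintro ⟨⟨h1, h2⟩, h3⟩
      refine ⟨⟨h1, fun x => ?_⟩, h3⟩
      have := Complex.le_def.mp (Matrix.PosSemidef.dotProduct_mulVec_nonneg ⟨h1, h2⟩ x)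
      exact ⟨by simpa using this.1, by simpa using this.2.symm⟩
    · rintro ⟨⟨h1, h2⟩, h3⟩
      refine ⟨posSemidef_iff_dotProduct_mulVec.mpr ⟨h1, fun x => ?_⟩, h3⟩
      rw [Complex.le_def]
      exact ⟨by simpa using (h2 x).1, by simpa using (h2 x).2.symm⟩
  rw [hset]
  have hquadcont : ∀ x : Fin p → ℂ,
      Continuous fun σ : Matrix (Fin p) (Fin p) ℂ => star x ⬝ᵥ (σ *ᵥ x) := fun x =>
    continuous_const.dotProduct (continuous_id.matrix_mulVec continuous_const)
  refine IsClosed.inter (IsClosed.inter ?_ ?_) ?_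
  · exact isClosed_eq (continuous_id.matrix_conjTranspose) continuous_id
  · refine isClosed_iInter fun x => IsClosed.inter ?_ ?_
    · exact isClosed_le continuous_const (Complex.continuous_re.comp (hquadcont x))
    · exact isClosed_eq (Complex.continuous_im.comp (hquadcont x)) continuous_const
  · exact isClosed_eq (continuous_id.matrix_trace) continuous_const

lemma isCompact_density {p : ℕ} : IsCompact {σ : Matrix (Fin p) (Fin p) ℂ | IsDensity σ} := by
  refine (Metric.isCompact_iff_isClosed_bounded).mpr ?_
  refine ⟨isClosed_density, ?_⟩
  refine (Metric.isBounded_closedBall (x := (0 : Matrix (Fin p) (Fin p) ℂ)) (r := 1)).subset ?_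
  intro σ hσ
  rw [Metric.mem_closedBall, dist_zero_right]
  refine (pi_norm_le_iff_of_nonneg zero_le_one).mpr fun i => ?_
  exact (pi_norm_le_iff_of_nonneg zero_le_one).mpr fun j => density_entry_bound hσ i j

lemma real_smul_matrix {m : Type*} [Fintype m] (r : ℝ) (M : Matrix m m ℂ) :
    (r : ℂ) • M = r • M := by
  ext i j
  simp [Complex.real_smul]

lemma sep_mem_hull {pA pB : ℕ} {ρ : Matrix (Fin pA × Fin pB) (Fin pA × Fin pB) ℂ}
    (h : IsSepState ρ) :
    ρ ∈ convexHull ℝ (Set.image2 (fun a b => a ⊗ₖ b)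
      {a : Matrix (Fin pA) (Fin pA) ℂ | IsDensity a}
      {b : Matrix (Fin pB) (Fin pB) ℂ | IsDensity b}) := by
  obtain ⟨n, q, σA, σB, hq0, hq1, hA, hB, heq⟩ := h
  have := Finset.centerMass_mem_convexHull (univ : Finset (Fin n))
    (fun j _ => hq0 j) (hq1 ▸ one_pos)
    (z := fun j => σA j ⊗ₖ σB j)
    (fun j _ => Set.mem_image2.mpr ⟨σA j, Set.mem_setOf.mpr (hA j), σB j, Set.mem_setOf.mpr (hB j), rfl⟩)
  rwa [Finset.centerMass_eq_of_sum_1 _ _ hq1, show ∑ j, q j • (σA j ⊗ₖ σB j) = ρ from ?_] at this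
  rw [heq]
  exact Finset.sum_congr rfl fun j _ => (real_smul_matrix (q j) _).symm

lemma hull_mem_sep {pA pB : ℕ} {ρ : Matrix (Fin pA × Fin pB) (Fin pA × Fin pB) ℂ}
    (h : ρ ∈ convexHull ℝ (Set.image2 (fun a b => a ⊗ₖ b)
      {a : Matrix (Fin pA) (Fin pA) ℂ | IsDensity a}
      {b : Matrix (Fin pB) (Fin pB) ℂ | IsDensity b})) :
    IsSepState ρ := by
  rw [_root_.convexHull_eq] at h
  obtain ⟨ι, t, w, z, hw0, hw1, hz, hx⟩ := h
  set e : Fin t.card ≃ {x // x ∈ t} := t.equivFin.symm with he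
  have hmem : ∀ k : Fin t.card, ∃ a b, IsDensity a ∧ IsDensity b ∧ a ⊗ₖ b = z ((e k) : ι) := by
    intro k
    obtain ⟨a, ha, b, hb, hab⟩ := Set.mem_image2.mp (hz _ (e k).2)
    exact ⟨a, b, ha, hb, hab⟩
  choose σA σB hA hB hAB using hmem
  refine ⟨t.card, fun k => w ((e k) : ι), σA, σB, fun k => hw0 _ (e k).2, ?_, hA, hB, ?_⟩
  · rw [show ∑ k, w ((e k) : ι) = ∑ x : {x // x ∈ t}, w x from
      Equiv.sum_comp e (fun x : {x // x ∈ t} => w (x : ι)), Finset.sum_coe_sort t w]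
    exact hw1
  · rw [← hx, Finset.centerMass_eq_of_sum_1 _ _ hw1]
    rw [← Finset.sum_coe_sort t (fun i => w i • z i)]
    rw [← Equiv.sum_comp e (fun x : {x // x ∈ t} => w (x : ι) • z (x : ι))]
    exact Finset.sum_congr rfl fun k _ => by
      rw [← hAB k, real_smul_matrix]

lemma exists_witness_matrix {m : Type*} [Fintype m] [DecidableEq m]
    (f : Matrix m m ℂ →L[ℝ] ℝ) :
    ∃ W : Matrix m m ℂ, W.IsHermitian ∧
      ∀ X : Matrix m m ℂ, X.IsHermitian → (W * X).trace = (f X : ℂ) := by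
  set W₀ : Matrix m m ℂ := Matrix.of fun i j =>
    (f (Matrix.single j i 1) : ℂ) - Complex.I * (f (Matrix.single j i Complex.I) : ℂ) with hW₀
  have hterm : ∀ (k l : m) (z : ℂ), (W₀ l k * z).re = f (Matrix.single k l z) := by
    intro k l z
    have hsb : Matrix.single k l z
        = z.re • Matrix.single k l 1 + z.im • Matrix.single k l Complex.I := by
      ext a b
      by_cases hab : k = a ∧ l = b
      · simp [Matrix.single, Matrix.of_apply, hab, Complex.real_smul,
          mul_one, Complex.re_add_im]
      · simp [Matrix.single, Matrix.of_apply, hab]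
    rw [hsb, map_add, _root_.map_smul, _root_.map_smul]
    simp only [hW₀, Matrix.of_apply, smul_eq_mul, Complex.sub_re, Complex.sub_im,
      Complex.mul_re, Complex.mul_im, Complex.I_re, Complex.I_im,
      Complex.ofReal_re, Complex.ofReal_im]
    ring
  have hre : ∀ X : Matrix m m ℂ, ((W₀ * X).trace).re = f X := by
    intro X
    have htr : (W₀ * X).trace = ∑ i, ∑ j, W₀ i j * X j i := by
      simp [Matrix.trace, Matrix.diag, Matrix.mul_apply]
    rw [htr]
    rw [Complex.re_sum]
    simp_rw [Complex.re_sum]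
    conv_rhs => rw [Matrix.matrix_eq_sum_single X, map_sum f]
    rw [Finset.sum_comm]
    refine Finset.sum_congr rfl fun j _ => ?_
    rw [map_sum f]
    exact Finset.sum_congr rfl fun i _ => hterm j i (X j i)
  refine ⟨(2⁻¹ : ℝ) • (W₀ + W₀ᴴ), ?_, ?_⟩
  · rw [Matrix.IsHermitian, Matrix.conjTranspose_smul, Matrix.conjTranspose_add,
      Matrix.conjTranspose_conjTranspose, star_trivial, add_comm]
  · intro X hX
    have h2 : (W₀ᴴ * X).trace = star ((W₀ * X).trace) := by
      calc (W₀ᴴ * X).trace = ((Xᴴ * W₀)ᴴ).trace := by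
            rw [Matrix.conjTranspose_mul, Matrix.conjTranspose_conjTranspose]
        _ = star ((Xᴴ * W₀).trace) := Matrix.trace_conjTranspose _
        _ = star ((X * W₀).trace) := by rw [hX]
        _ = star ((W₀ * X).trace) := by rw [Matrix.trace_mul_comm]
    rw [Matrix.smul_mul, Matrix.add_mul, Matrix.trace_smul, Matrix.trace_add, h2]
    set zz := (W₀ * X).trace with hzz
    have : zz + star zz = ((2 * zz.re : ℝ) : ℂ) := Complex.add_conj zz
    rw [this, hre X]
    rw [Complex.real_smul]
    push_cast
    ring

theorem entanglement_witness_exists {pA pB : ℕ}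
    (ρ : Matrix (Fin pA × Fin pB) (Fin pA × Fin pB) ℂ)
    (hρ : IsDensity ρ) (hent : ¬ IsSepState ρ) :
    ∃ W : Matrix (Fin pA × Fin pB) (Fin pA × Fin pB) ℂ, W.IsHermitian ∧
      (∀ ρS, IsDensity ρS → IsSepState ρS → 0 ≤ (W * ρS).trace) ∧
      (W * ρ).trace < 0 := by
  classical
  set P : Set (Matrix (Fin pA × Fin pB) (Fin pA × Fin pB) ℂ) :=
    Set.image2 (fun a b => a ⊗ₖ b)
      {a : Matrix (Fin pA) (Fin pA) ℂ | IsDensity a}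
      {b : Matrix (Fin pB) (Fin pB) ℂ | IsDensity b} with hP
  have hPcompact : IsCompact P := by
    rw [hP, ← Set.image_prod]
    refine (IsCompact.prod isCompact_density isCompact_density).image ?_
    apply continuous_matrix
    intro i j
    simp only [Matrix.kroneckerMap_apply]
    exact (continuous_fst.matrix_elem i.1 j.1).mul (continuous_snd.matrix_elem i.2 j.2)
  have hSclosed : IsClosed (convexHull ℝ P) := (myIsCompact_convexHull hPcompact).isClosed
  have hSconv : Convex ℝ (convexHull ℝ P) := convex_convexHull ℝ P
  have hρnot : ρ ∉ convexHull ℝ P := fun h => hent (hull_mem_sep h)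
  haveI : LocallyConvexSpace ℝ (Matrix (Fin pA × Fin pB) (Fin pA × Fin pB) ℂ) :=
    NormedSpace.toLocallyConvexSpace
  obtain ⟨f, u, hfρ, hfS⟩ := geometric_hahn_banach_point_closed hSconv hSclosed hρnot
  obtain ⟨W', hW'h, hW'tr⟩ := exists_witness_matrix f
  refine ⟨W' - (u : ℂ) • 1, ?_, ?_, ?_⟩
  · rw [Matrix.IsHermitian, Matrix.conjTranspose_sub, hW'h, Matrix.conjTranspose_smul,
      Matrix.conjTranspose_one, Complex.star_def, Complex.conj_ofReal]
  · intro ρS hρSd hρSsep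
    have htr : ((W' - (u : ℂ) • 1) * ρS).trace = ((f ρS - u : ℝ) : ℂ) := by
      rw [Matrix.sub_mul, Matrix.trace_sub, hW'tr ρS hρSd.1.1, Matrix.smul_mul,
        Matrix.one_mul, Matrix.trace_smul, hρSd.2, smul_eq_mul, mul_one]
      push_cast
      ring
    rw [htr]
    rw [Complex.zero_le_real]
    have := hfS ρS (sep_mem_hull hρSsep)
    linarith
  · have htr : ((W' - (u : ℂ) • 1) * ρ).trace = ((f ρ - u : ℝ) : ℂ) := by
      rw [Matrix.sub_mul, Matrix.trace_sub, hW'tr ρ hρ.1.1, Matrix.smul_mul,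
        Matrix.one_mul, Matrix.trace_smul, hρ.2, smul_eq_mul, mul_one]
      push_cast
      ring
    rw [htr, show (0 : ℂ) = ((0 : ℝ) : ℂ) from Complex.ofReal_zero.symm,
      Complex.real_lt_real]
    linarith
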